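/- arXiv:2508.19000 — 3 statements merged into one kernel-verified Lean document; each statement's English description precedes it below -/
import Mathlib

section
/- Let α ∈ C^N and suppose α_i = γ·α_{i+1} for some real γ ≠ 0 and some index i. Then for any real symmetric tridiagonal matrix B and any β ∈ C^N, if Bα = β, there exists a real symmetric matrix B' that is tridiagonal with (i,i+1) and (i+1,i) entries equal to zero (i.e., block-diagonal with blocks of sizes i and N−i) such that B'α = β. -/
open Matrix BigOperators
set_option maxHeartbeats 1000000

/-- If α_i = γ·α_{i+1} for some real γ ≠ 0, then for any real symmetric
tridiagonal B with Bα = β there is a real symmetric tridiagonal B' whose (i,i+1) and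
(i+1,i) entries vanish (block-diagonal with blocks of sizes i and N−i) with B'α = β. -/
theorem stmt9 (N : ℕ) (α β : Fin N → ℂ) (i : Fin N) (hi : (i : ℕ) + 1 < N)
    (γ : ℝ) (hγ : γ ≠ 0) (hα : α i = (γ : ℂ) * α ⟨(i : ℕ) + 1, hi⟩)
    (B : Matrix (Fin N) (Fin N) ℝ) (hBsym : Bᵀ = B)
    (hBtri : ∀ k l : Fin N, ((k : ℕ) + 1 < (l : ℕ) ∨ (l : ℕ) + 1 < (k : ℕ)) → B k l = 0)
    (hBα : (B.map Complex.ofReal) *ᵥ α = β) :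
    ∃ B' : Matrix (Fin N) (Fin N) ℝ, B'ᵀ = B' ∧
      (∀ k l : Fin N, ((k : ℕ) + 1 < (l : ℕ) ∨ (l : ℕ) + 1 < (k : ℕ)) → B' k l = 0) ∧
      B' i ⟨(i : ℕ) + 1, hi⟩ = 0 ∧ B' ⟨(i : ℕ) + 1, hi⟩ i = 0 ∧
      (B'.map Complex.ofReal) *ᵥ α = β := by
  classical
  set j : Fin N := ⟨(i : ℕ) + 1, hi⟩ with hjdef
  have hij : i ≠ j := by
    intro h
    have := congrArg Fin.val h
    simp [hjdef] at this
  have hsym : ∀ k l, B l k = B k l := fun k l => congrFun (congrFun hBsym k) l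
  set b := B i j with hb
  set B' : Matrix (Fin N) (Fin N) ℝ := Matrix.of fun k l =>
    if (k = i ∧ l = j) ∨ (k = j ∧ l = i) then 0
    else if k = i ∧ l = i then B i i + b / γ
    else if k = j ∧ l = j then B j j + γ * b
    else B k l with hB'def
  have hE : ∀ k l, B' k l =
      if (k = i ∧ l = j) ∨ (k = j ∧ l = i) then 0
      else if k = i ∧ l = i then B i i + b / γ
      else if k = j ∧ l = j then B j j + γ * b
      else B k l := fun k l => rfl
  have hB'ij : B' i j = 0 := by rw [hE, if_pos (Or.inl ⟨rfl, rfl⟩)]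
  have hB'ji : B' j i = 0 := by rw [hE, if_pos (Or.inr ⟨rfl, rfl⟩)]
  have hB'ii : B' i i = B i i + b / γ := by
    rw [hE, if_neg, if_pos ⟨rfl, rfl⟩]
    rintro (⟨-, h⟩ | ⟨h, -⟩) <;> exact hij h
  have hB'jj : B' j j = B j j + γ * b := by
    rw [hE, if_neg, if_neg, if_pos ⟨rfl, rfl⟩]
    · rintro ⟨h, -⟩; exact hij h.symm
    · rintro (⟨h, -⟩ | ⟨-, h⟩) <;> exact hij h.symm
  have hB'other : ∀ k l : Fin N,
      ¬((k = i ∨ k = j) ∧ (l = i ∨ l = j)) → B' k l = B k l := by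
    intro k l h
    rw [hE, if_neg (by tauto), if_neg (by tauto), if_neg (by tauto)]
  refine ⟨B', ?_, ?_, hB'ij, hB'ji, ?_⟩
  · ext k l
    simp only [transpose_apply, hE]
    split_ifs <;> first | rfl | (exact hsym l k) | (exact (hsym l k).symm) | tauto
  · intro k l h
    have hkl : k ≠ l := by intro he; subst he; omega
    rw [hE]
    split_ifs with h1 h2 h3
    · rfl
    · exact absurd (h2.1.trans h2.2.symm) hkl
    · exact absurd (h3.1.trans h3.2.symm) hkl
    · exact hBtri k l h
  · funext k
    have hβ : β k = ∑ l, ((B k l : ℂ)) * α l := by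
      rw [← hBα]; simp [Matrix.mulVec, dotProduct, Matrix.map_apply]
    show ∑ l, ((B' k l : ℝ) : ℂ) * α l = β k
    rw [hβ, ← sub_eq_zero, ← Finset.sum_sub_distrib]
    by_cases hki : k = i
    · subst hki
      have hzero : ∀ x ∈ Finset.univ, x ∉ ({k, j} : Finset (Fin N)) →
          ((B' k x : ℝ) : ℂ) * α x - ((B k x : ℝ) : ℂ) * α x = 0 := by
        intro x _ hx
        simp only [Finset.mem_insert, Finset.mem_singleton, not_or] at hx
        rw [hB'other k x (by tauto), sub_self]
      rw [← Finset.sum_subset (Finset.subset_univ _) hzero,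
        Finset.sum_pair hij, hB'ii, hB'ij]
      have hγc : (γ : ℂ) ≠ 0 := by exact_mod_cast hγ
      push_cast
      rw [hα]
      have h1 : ((b : ℂ) / γ) * ((γ : ℂ) * α j) = (b : ℂ) * α j := by
        field_simp
      linear_combination h1
    · by_cases hkj : k = j
      · subst hkj
        have hzero : ∀ x ∈ Finset.univ, x ∉ ({i, j} : Finset (Fin N)) →
            ((B' j x : ℝ) : ℂ) * α x - ((B j x : ℝ) : ℂ) * α x = 0 := by
          intro x _ hx
          simp only [Finset.mem_insert, Finset.mem_singleton, not_or] at hx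
          rw [hB'other j x (by tauto), sub_self]
        rw [← Finset.sum_subset (Finset.subset_univ _) hzero,
          Finset.sum_pair hij, hB'ji, hB'jj]
        have hBji : B j i = b := hsym i j
        rw [hBji]
        push_cast
        rw [hα]
        ring
      · apply Finset.sum_eq_zero
        intro x _
        rw [hB'other k x (by tauto), sub_self]
end

section
/- Let h_R, h_T ∈ C^N be nonzero, and suppose that for every index i ∈ {1,...,N−1} there exists a nonzero real γ_i with [ĥ_R + ĥ_T]_i = γ_i·[ĥ_R + ĥ_T]_{i+1}, where ĥ = h/||h||. If additionally there is no γ > 0 with |[h_R]_n| = γ|[h_T]_n| for all n, then no real symmetric tridiagonal matrix B satisfies B·(i·Z_0(ĥ_R + ĥ_T)) = ĥ_T − ĥ_R for any Z_0 > 0. -/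
open Matrix BigOperators

lemma key15 (a b z : ℂ) (r ρ : ℝ) (h1 : a + b = (r:ℂ) * z)
    (h2 : b - a = Complex.I * (ρ:ℂ) * z) : ‖a‖ = ‖b‖ := by
  have ha : a = (((r:ℂ) - Complex.I*ρ)/2) * z := by linear_combination (h1 - h2)/2
  have hb : b = (((r:ℂ) + Complex.I*ρ)/2) * z := by linear_combination (h1 + h2)/2
  rw [ha, hb, norm_mul, norm_mul, norm_div, norm_div]
  congr 2
  simp [Complex.norm_def, Complex.normSq_apply]

/-- Adversarial channels for the tridiagonal tree-connected BD-RIS (special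
case I = {1,…,N−1} of Theorem 1): if every pair of adjacent entries of ĥ_R + ĥ_T are
nonzero real multiples of each other, and the entrywise magnitudes of h_R and h_T are not
proportional, then no real symmetric tridiagonal B solves B·(iZ₀(ĥ_R + ĥ_T)) = ĥ_T − ĥ_R
for any Z₀ > 0. -/
theorem stmt15 (N : ℕ) (hR hT : Fin N → ℂ) (hR0 : hR ≠ 0) (hT0 : hT ≠ 0)
    (hadj : ∀ (i : Fin N) (hi : (i : ℕ) + 1 < N), ∃ γ : ℝ, γ ≠ 0 ∧
      (hR i / ((Real.sqrt (∑ n, ‖hR n‖ ^ 2) : ℝ) : ℂ)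
          + hT i / ((Real.sqrt (∑ n, ‖hT n‖ ^ 2) : ℝ) : ℂ))
        = (γ : ℂ) * (hR ⟨(i : ℕ) + 1, hi⟩ / ((Real.sqrt (∑ n, ‖hR n‖ ^ 2) : ℝ) : ℂ)
            + hT ⟨(i : ℕ) + 1, hi⟩ / ((Real.sqrt (∑ n, ‖hT n‖ ^ 2) : ℝ) : ℂ)))
    (hnp : ¬ ∃ γ : ℝ, 0 < γ ∧ ∀ n, ‖hR n‖ = γ * ‖hT n‖) :
    ∀ (Z0 : ℝ), 0 < Z0 → ∀ B : Matrix (Fin N) (Fin N) ℝ, Bᵀ = B →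
      (∀ k l : Fin N, ((k : ℕ) + 1 < (l : ℕ) ∨ (l : ℕ) + 1 < (k : ℕ)) → B k l = 0) →
      ¬ ((B.map Complex.ofReal) *ᵥ (fun n => Complex.I * (Z0 : ℂ)
            * (hR n / ((Real.sqrt (∑ m, ‖hR m‖ ^ 2) : ℝ) : ℂ)
              + hT n / ((Real.sqrt (∑ m, ‖hT m‖ ^ 2) : ℝ) : ℂ)))
          = fun n => hT n / ((Real.sqrt (∑ m, ‖hT m‖ ^ 2) : ℝ) : ℂ)
              - hR n / ((Real.sqrt (∑ m, ‖hR m‖ ^ 2) : ℝ) : ℂ)) := by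
  intro Z0 hZ0 B hBsym hBtri heq
  -- N > 0
  rcases Function.ne_iff.mp hR0 with ⟨n0, hn0⟩
  have hn0' : hR n0 ≠ 0 := by simpa using hn0
  have hN : 0 < N := n0.pos
  set R : ℝ := Real.sqrt (∑ n, ‖hR n‖ ^ 2) with hRdef
  set T : ℝ := Real.sqrt (∑ n, ‖hT n‖ ^ 2) with hTdef
  have hRpos : 0 < R := by
    apply Real.sqrt_pos.mpr
    apply Finset.sum_pos' (fun i _ => by positivity)
    exact ⟨n0, Finset.mem_univ _, pow_pos (norm_pos_iff.mpr hn0') 2⟩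
  have hTpos : 0 < T := by
    rcases Function.ne_iff.mp hT0 with ⟨m0, hm0⟩
    have hm0' : hT m0 ≠ 0 := by simpa using hm0
    apply Real.sqrt_pos.mpr
    apply Finset.sum_pos' (fun i _ => by positivity)
    exact ⟨m0, Finset.mem_univ _, pow_pos (norm_pos_iff.mpr hm0') 2⟩
  set a : Fin N → ℂ := fun n => hR n / (R : ℂ) with hadef
  set b : Fin N → ℂ := fun n => hT n / (T : ℂ) with hbdef
  set s : Fin N → ℂ := fun n => a n + b n with hsdef
  set z0 : ℂ := s ⟨0, hN⟩ with hz0def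
  -- every entry of s is a real multiple of s 0
  have hchain : ∀ k (hk : k < N), ∃ r : ℝ, s ⟨k, hk⟩ = (r : ℂ) * z0 := by
    intro k
    induction k with
    | zero => intro hk; exact ⟨1, by simp [hz0def]⟩
    | succ k ih =>
      intro hk
      have hk' : k < N := Nat.lt_of_succ_lt hk
      obtain ⟨r, hr⟩ := ih hk'
      obtain ⟨γ, hγ0, hγ⟩ := hadj ⟨k, hk'⟩ hk
      have hsk : s ⟨k, hk'⟩ = (γ : ℂ) * s ⟨k+1, hk⟩ := hγ
      have hγC : (γ : ℂ) ≠ 0 := by exact_mod_cast hγ0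
      refine ⟨γ⁻¹ * r, mul_left_cancel₀ hγC ?_⟩
      push_cast
      rw [← hsk, hr]
      field_simp
  -- show |hR n| = (R/T) |hT n| for all n
  apply hnp
  refine ⟨R / T, div_pos hRpos hTpos, fun n => ?_⟩
  obtain ⟨r, hr⟩ := hchain n.1 n.2
  have hn : s n = (r : ℂ) * z0 := by rw [← hr]
  -- the n-th row of the equation
  have hrow := congrFun heq n
  simp only [mulVec, dotProduct, Matrix.map_apply] at hrow
  choose rr hrr using fun m : Fin N => hchain m.1 m.2
  have hsum : ∀ m : Fin N, (Complex.ofReal (B n m)) * (Complex.I * (Z0 : ℂ) * s m)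
      = Complex.I * ((Z0 * B n m * rr m : ℝ) : ℂ) * z0 := by
    intro m
    have : s m = (rr m : ℂ) * z0 := by rw [← hrr m]
    rw [this]; push_cast; ring
  have hrow2 : b n - a n = Complex.I * ((∑ m, Z0 * B n m * rr m : ℝ) : ℂ) * z0 := by
    rw [← hrow]
    calc ∑ m, (Complex.ofReal (B n m)) * (Complex.I * (Z0:ℂ) * s m)
        = ∑ m, Complex.I * ((Z0 * B n m * rr m : ℝ) : ℂ) * z0 :=
          Finset.sum_congr rfl (fun m _ => hsum m)
      _ = Complex.I * ((∑ m, Z0 * B n m * rr m : ℝ) : ℂ) * z0 := by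
          push_cast; simp only [Finset.mul_sum, Finset.sum_mul]
  have hab : ‖a n‖ = ‖b n‖ := key15 (a n) (b n) z0 r _ hn hrow2
  have haR : ‖a n‖ = ‖hR n‖ / R := by
    rw [hadef]; simp [norm_div, Complex.norm_real, abs_of_pos hRpos]
  have hbT : ‖b n‖ = ‖hT n‖ / T := by
    rw [hbdef]; simp [norm_div, Complex.norm_real, abs_of_pos hTpos]
  rw [haR, hbT] at hab
  field_simp at hab ⊢
  linarith [hab]
end

section
/- Let Θ = diag(Θ_1,...,Θ_G) be block-diagonal with each Θ_g unitary of size |J_g|, matching a partition J_1,...,J_G of {1,...,N}. Then for nonzero u, v ∈ C^N, |u^H Θ v|^2 = ||u||^2||v||^2 implies there exists γ > 0 with ||u_{J_g}|| = γ||v_{J_g}|| for all g. -/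
open Matrix BigOperators

/-- Euclidean norm of the subvector of `u` on the group `{i | g i = k}`. -/
noncomputable def gnorm {N G : ℕ} (g : Fin N → Fin G) (u : Fin N → ℂ) (k : Fin G) : ℝ :=
  Real.sqrt (∑ i ∈ Finset.univ.filter (fun i => g i = k), ‖u i‖ ^ 2)

lemma conj_mul_self_eq (z : ℂ) : (starRingEnd ℂ) z * z = ((‖z‖ : ℂ)) ^ 2 := by
  rw [mul_comm, Complex.mul_conj, Complex.normSq_eq_norm_sq]
  push_cast
  rfl

/-- If Θ is block-diagonal unitary (blocks given by the partition into
fibers of g) and |u^H Θ v|² = ||u||²||v||² with u, v nonzero, then there is γ > 0 with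
||u_{J_g}|| = γ||v_{J_g}|| for all g. -/
theorem stmt19 (N G : ℕ) (g : Fin N → Fin G) (u v : Fin N → ℂ) (hu : u ≠ 0) (hv : v ≠ 0)
    (Θ : Matrix (Fin N) (Fin N) ℂ) (hΘ : Θᴴ * Θ = 1)
    (hblk : ∀ i j, g i ≠ g j → Θ i j = 0)
    (heq : ‖star u ⬝ᵥ (Θ *ᵥ v)‖ ^ 2 = (∑ i, ‖u i‖ ^ 2) * (∑ i, ‖v i‖ ^ 2)) :
    ∃ γ : ℝ, 0 < γ ∧ ∀ k, gnorm g u k = γ * gnorm g v k := by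
  set w : Fin N → ℂ := Θ *ᵥ v with hw
  -- key block fact: groupwise norms of w and v agree
  have key : ∀ k : Fin G,
      (∑ i ∈ Finset.univ.filter (fun i => g i = k), ‖w i‖ ^ 2)
        = ∑ j ∈ Finset.univ.filter (fun j => g j = k), ‖v j‖ ^ 2 := by
    intro k
    set S := Finset.univ.filter (fun i : Fin N => g i = k) with hS
    have hmemS : ∀ i : Fin N, i ∈ S ↔ g i = k := by
      intro i; simp [hS]
    have T : ∀ j j' : Fin N,
        (∑ i ∈ S, (starRingEnd ℂ) (Θ i j) * Θ i j')
          = if j = j' ∧ g j = k then 1 else 0 := by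
      intro j j'
      by_cases hj : g j = k
      · by_cases hj' : g j' = k
        · have hfull : (∑ i ∈ S, (starRingEnd ℂ) (Θ i j) * Θ i j')
              = ∑ i, (starRingEnd ℂ) (Θ i j) * Θ i j' := by
            apply Finset.sum_subset (Finset.subset_univ S)
            intro i _ hiS
            have : g i ≠ g j := by
              rw [hj]; intro h; exact hiS ((hmemS i).2 h)
            rw [hblk i j this]; simp
          have hunit : (∑ i, (starRingEnd ℂ) (Θ i j) * Θ i j')
              = (1 : Matrix (Fin N) (Fin N) ℂ) j j' := by
            rw [← hΘ]
            simp [Matrix.mul_apply, Matrix.conjTranspose_apply]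
          rw [hfull, hunit, Matrix.one_apply]
          by_cases hjj : j = j' <;> simp [hjj, hj, hj']
        · have hz : ∀ i ∈ S, (starRingEnd ℂ) (Θ i j) * Θ i j' = 0 := by
            intro i hi
            have : g i ≠ g j' := by rw [(hmemS i).1 hi]; exact fun h => hj' h.symm
            rw [hblk i j' this, mul_zero]
          rw [Finset.sum_eq_zero hz]
          have hcond : ¬(j = j' ∧ g j = k) := by
            rintro ⟨rfl, h⟩; exact hj' h
          simp [hcond]
      · have hz : ∀ i ∈ S, (starRingEnd ℂ) (Θ i j) * Θ i j' = 0 := by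
          intro i hi
          have : g i ≠ g j := by rw [(hmemS i).1 hi]; exact fun h => hj h.symm
          rw [hblk i j this]; simp
        rw [Finset.sum_eq_zero hz]
        have hcond : ¬(j = j' ∧ g j = k) := fun h => hj h.2
        simp [hcond]
    have hC : (∑ i ∈ S, ((‖w i‖ : ℂ)) ^ 2) = ∑ j ∈ S, ((‖v j‖ : ℂ)) ^ 2 := by
      have expand : ∀ i : Fin N, ((‖w i‖ : ℂ)) ^ 2
          = ∑ j, ∑ j', ((starRingEnd ℂ) (Θ i j) * Θ i j')
              * ((starRingEnd ℂ) (v j) * v j') := by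
        intro i
        rw [← conj_mul_self_eq]
        have hwi : w i = ∑ j, Θ i j * v j := by
          simp [hw, Matrix.mulVec, dotProduct]
        rw [hwi, map_sum, Finset.sum_mul_sum]
        apply Finset.sum_congr rfl; intro j _
        apply Finset.sum_congr rfl; intro j' _
        simp only [_root_.map_mul]
        ring
      calc ∑ i ∈ S, ((‖w i‖ : ℂ)) ^ 2
          = ∑ i ∈ S, ∑ j, ∑ j', ((starRingEnd ℂ) (Θ i j) * Θ i j')
              * ((starRingEnd ℂ) (v j) * v j') :=
            Finset.sum_congr rfl fun i _ => expand i
        _ = ∑ j, ∑ j', (∑ i ∈ S, (starRingEnd ℂ) (Θ i j) * Θ i j')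
              * ((starRingEnd ℂ) (v j) * v j') := by
            rw [Finset.sum_comm]
            apply Finset.sum_congr rfl; intro j _
            rw [Finset.sum_comm]
            apply Finset.sum_congr rfl; intro j' _
            rw [Finset.sum_mul]
        _ = ∑ j, ∑ j', (if j = j' ∧ g j = k then 1 else 0)
              * ((starRingEnd ℂ) (v j) * v j') := by
            apply Finset.sum_congr rfl; intro j _
            apply Finset.sum_congr rfl; intro j' _
            rw [T]
        _ = ∑ j, (if g j = k then (starRingEnd ℂ) (v j) * v j else 0) := by
            apply Finset.sum_congr rfl; intro j _
            by_cases hj : g j = k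
            · simp [hj]
            · simp [hj]
        _ = ∑ j ∈ S, (starRingEnd ℂ) (v j) * v j := by
            rw [Finset.sum_filter]
        _ = ∑ j ∈ S, ((‖v j‖ : ℂ)) ^ 2 :=
            Finset.sum_congr rfl fun j _ => conj_mul_self_eq (v j)
    exact_mod_cast hC
  -- global norms of w and v agree
  have hsumw : (∑ i, ‖w i‖ ^ 2) = ∑ i, ‖v i‖ ^ 2 := by
    rw [← Finset.sum_fiberwise Finset.univ g (fun i => ‖w i‖ ^ 2),
        ← Finset.sum_fiberwise Finset.univ g (fun i => ‖v i‖ ^ 2)]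
    exact Finset.sum_congr rfl fun k _ => key k
  -- pass to EuclideanSpace
  set U : EuclideanSpace ℂ (Fin N) := (WithLp.equiv 2 _).symm u with hU
  set W : EuclideanSpace ℂ (Fin N) := (WithLp.equiv 2 _).symm w with hW
  have hUapp : ∀ i, U i = u i := fun i => rfl
  have hWapp : ∀ i, W i = w i := fun i => rfl
  have hnormU : ‖U‖ ^ 2 = ∑ i, ‖u i‖ ^ 2 := by
    rw [EuclideanSpace.norm_eq,
      Real.sq_sqrt (Finset.sum_nonneg fun i _ => sq_nonneg _)]
    rfl
  have hnormW : ‖W‖ ^ 2 = ∑ i, ‖w i‖ ^ 2 := by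
    rw [EuclideanSpace.norm_eq,
      Real.sq_sqrt (Finset.sum_nonneg fun i _ => sq_nonneg _)]
    rfl
  have hvpos : 0 < ∑ i, ‖v i‖ ^ 2 := by
    by_contra h
    push_neg at h
    have h0 : ∑ i, ‖v i‖ ^ 2 = 0 :=
      le_antisymm h (Finset.sum_nonneg fun i _ => sq_nonneg _)
    have hv0 : ∀ i, v i = 0 := by
      intro i
      have := (Finset.sum_eq_zero_iff_of_nonneg
        (fun i _ => sq_nonneg ‖v i‖)).mp h0 i (Finset.mem_univ i)
      simpa using this
    exact hv (funext hv0)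
  have hU0 : U ≠ 0 := fun h => hu (funext fun i => by
    have := congrArg (fun x : EuclideanSpace ℂ (Fin N) => x i) h
    simpa [hUapp] using this)
  have hW0 : W ≠ 0 := by
    intro h
    have hw0 : ∀ i, w i = 0 := fun i => by
      have := congrArg (fun x : EuclideanSpace ℂ (Fin N) => x i) h
      simpa [hWapp] using this
    have hzero : (∑ i, ‖w i‖ ^ 2) = 0 := by simp [hw0]
    rw [hsumw] at hzero
    exact absurd hzero (ne_of_gt hvpos)
  have hinner : @inner ℂ _ _ U W = star u ⬝ᵥ w :=
    by rw [dotProduct_comm]; exact EuclideanSpace.inner_toLp_toLp u w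
  have hCS : ‖@inner ℂ _ _ U W‖ = ‖U‖ * ‖W‖ := by
    have h2 : ‖@inner ℂ _ _ U W‖ ^ 2 = (‖U‖ * ‖W‖) ^ 2 := by
      rw [hinner, mul_pow, hnormU, hnormW, hsumw]
      exact heq
    calc ‖@inner ℂ _ _ U W‖ = Real.sqrt (‖@inner ℂ _ _ U W‖ ^ 2) :=
          (Real.sqrt_sq (norm_nonneg _)).symm
      _ = Real.sqrt ((‖U‖ * ‖W‖) ^ 2) := by rw [h2]
      _ = ‖U‖ * ‖W‖ := Real.sqrt_sq (mul_nonneg (norm_nonneg _) (norm_nonneg _))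
  obtain ⟨r, hr, hWr⟩ := (norm_inner_eq_norm_iff hU0 hW0).mp hCS
  have hwi : ∀ i, w i = r * u i := by
    intro i
    have := congrArg (fun x : EuclideanSpace ℂ (Fin N) => x i) hWr
    simpa [hWapp, hUapp] using this
  have hrn : 0 < ‖r‖ := norm_pos_iff.mpr hr
  refine ⟨‖r‖⁻¹, inv_pos.mpr hrn, fun k => ?_⟩
  have h1 : gnorm g w k = ‖r‖ * gnorm g u k := by
    unfold gnorm
    have hsum : (∑ i ∈ Finset.univ.filter (fun i => g i = k), ‖w i‖ ^ 2)
        = ‖r‖ ^ 2 * ∑ i ∈ Finset.univ.filter (fun i => g i = k), ‖u i‖ ^ 2 := by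
      rw [Finset.mul_sum]
      exact Finset.sum_congr rfl fun i _ => by rw [hwi i, norm_mul, mul_pow]
    rw [hsum, Real.sqrt_mul (sq_nonneg _), Real.sqrt_sq (norm_nonneg r)]
  have h2 : gnorm g w k = gnorm g v k := by unfold gnorm; rw [key k]
  rw [h1] at h2
  rw [← h2, ← mul_assoc, inv_mul_cancel₀ (ne_of_gt hrn), one_mul]
end
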